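/- Let S be a finite set, s₀ ∈ S, H ≥ 1, and for each t ∈ {0,…,H−1} let f_t : S × S → ℝ be nonnegative. Assume f_0(s, s′) = 0 whenever s ≠ s₀, Σ_{s′∈S} f_0(s₀, s′) = 1, and the conservation law Σ_{s′∈S} f_t(s, s′) = Σ_{s″∈S} f_{t−1}(s″, s) for every t ∈ {1,…,H−1} and s ∈ S. Call a function τ : {0,…,H} → S with τ(0) = s₀ a trajectory. Then there is a nonnegative weight function c on trajectories such that: (i) c(τ) > 0 for at most |{(t, s, s′) : f_t(s, s′) > 0}| trajectories; (ii) Σ_τ c(τ) = 1; and (iii) f_t(s, s′) = Σ_{τ : τ(t) = s, τ(t+1) = s′} c(τ) for every t ∈ {0,…,H−1} and s, s′ ∈ S. Consequently, for every k ≥ 1 and R : S → ℝ^k, setting Φ(τ) := Σ_{t=0}^{H−1} R(τ(t)), one has Σ_τ c(τ)·Φ(τ) = Σ_{t=0}^{H−1} Σ_{(s,s′)∈S×S} f_t(s, s′)·R(s). -/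

import Mathlib

open scoped BigOperators
open Finset

open Classical in
noncomputable def flowPath {S : Type*} (f : ℕ → S → S → ℝ) (s₀ : S) : ℕ → S
  | 0 => s₀
  | t + 1 =>
      if h : ∃ s', 0 < f t (flowPath f s₀ t) s' then h.choose
      else flowPath f s₀ t

lemma flowPath_pos {S : Type*} [Fintype S] (f : ℕ → S → S → ℝ) (s₀ : S) (H : ℕ)
    (hf_nonneg : ∀ t, t < H → ∀ s s', 0 ≤ f t s s')
    (hcons : ∀ t, 1 ≤ t → t < H → ∀ s : S,
      ∑ s' : S, f t s s' = ∑ s'' : S, f (t - 1) s'' s)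
    (h0 : ∃ s', 0 < f 0 s₀ s') :
    ∀ t, t < H → 0 < f t (flowPath f s₀ t) (flowPath f s₀ (t + 1)) := by
  intro t
  induction t with
  | zero =>
      intro _
      have h1 : flowPath f s₀ 1 = h0.choose := by
        simp only [flowPath]; exact dif_pos h0
      show 0 < f 0 (flowPath f s₀ 0) (flowPath f s₀ 1)
      rw [h1, flowPath]
      exact h0.choose_spec
  | succ t ih =>
      intro hlt
      have ht : t < H := Nat.lt_of_succ_lt hlt
      have hprev := ih ht
      have hsum : 0 < ∑ s' : S, f (t + 1) (flowPath f s₀ (t + 1)) s' := by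
        rw [hcons (t + 1) (Nat.le_add_left 1 t) hlt, Nat.add_sub_cancel]
        calc (0:ℝ) < f t (flowPath f s₀ t) (flowPath f s₀ (t + 1)) := hprev
          _ ≤ ∑ s'' : S, f t s'' (flowPath f s₀ (t + 1)) :=
            Finset.single_le_sum (fun s'' _ => hf_nonneg t ht s'' _) (mem_univ _)
      have hex : ∃ s', 0 < f (t + 1) (flowPath f s₀ (t + 1)) s' := by
        by_contra hc
        push_neg at hc
        have : ∑ s' : S, f (t + 1) (flowPath f s₀ (t + 1)) s' ≤ 0 :=
          Finset.sum_nonpos (fun s' _ => hc s')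
        linarith
      have h1 : flowPath f s₀ (t+2) = hex.choose := by
        conv_lhs => rw [flowPath]
        rw [dif_pos hex]
      rw [h1]
      exact hex.choose_spec

lemma flowMass {S : Type*} [Fintype S] (f : ℕ → S → S → ℝ) (s₀ : S) (H : ℕ) (m : ℝ)
    (hf0 : ∀ s s', s ≠ s₀ → f 0 s s' = 0)
    (hf0sum : ∑ s' : S, f 0 s₀ s' = m)
    (hcons : ∀ t, 1 ≤ t → t < H → ∀ s : S,
      ∑ s' : S, f t s s' = ∑ s'' : S, f (t - 1) s'' s) :
    ∀ t, t < H → ∑ s : S, ∑ s' : S, f t s s' = m := by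
  intro t
  induction t with
  | zero =>
      intro _
      rw [← hf0sum]
      rw [Finset.sum_eq_single s₀]
      · intro b _ hb
        exact Finset.sum_eq_zero (fun s' _ => hf0 b s' hb)
      · intro h; exact absurd (mem_univ s₀) h
  | succ t ih =>
      intro hlt
      have ht : t < H := Nat.lt_of_succ_lt hlt
      calc ∑ s : S, ∑ s' : S, f (t+1) s s'
          = ∑ s : S, ∑ s'' : S, f t s'' s := by
            refine Finset.sum_congr rfl fun s _ => ?_
            simpa using hcons (t+1) (Nat.le_add_left 1 t) hlt s
        _ = ∑ s'' : S, ∑ s : S, f t s'' s := Finset.sum_comm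
        _ = m := ih ht

lemma flowDecompTrivial {S : Type*} [Fintype S] [DecidableEq S] (s₀ : S) (H : ℕ) (hH : 1 ≤ H)
    (f : ℕ → S → S → ℝ) (m : ℝ)
    (hzero : ∀ t, t < H → ∀ s s', f t s s' = 0)
    (hsum : ∑ s' : S, f 0 s₀ s' = m) :
    ∃ c : (Fin (H + 1) → S) → ℝ,
      (∀ τ, 0 ≤ c τ) ∧
      (∀ τ, τ 0 ≠ s₀ → c τ = 0) ∧
      (Finset.univ.filter fun τ : Fin (H + 1) → S => 0 < c τ).card ≤
        ((Finset.range H ×ˢ (Finset.univ : Finset (S × S))).filter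
          (fun p => 0 < f p.1 p.2.1 p.2.2)).card ∧
      (∑ τ : Fin (H + 1) → S, c τ = m) ∧
      (∀ t : Fin H, ∀ s s' : S,
        f t s s' = ∑ τ ∈ Finset.univ.filter
          (fun τ : Fin (H + 1) → S => τ t.castSucc = s ∧ τ t.succ = s'), c τ) := by
  have hm : m = 0 := by
    rw [← hsum]; exact Finset.sum_eq_zero fun s' _ => hzero 0 hH s₀ s'
  refine ⟨fun _ => 0, fun _ => le_refl 0, fun _ _ => rfl, ?_, by simp [hm], ?_⟩
  · simp
  · intro t s s'
    rw [hzero t t.isLt s s']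
    simp

lemma flowDecompAux {S : Type*} [Fintype S] [DecidableEq S] (s₀ : S) (H : ℕ) (hH : 1 ≤ H) :
    ∀ n : ℕ, ∀ f : ℕ → S → S → ℝ, ∀ m : ℝ,
    ((Finset.range H ×ˢ (Finset.univ : Finset (S × S))).filter
        (fun p => 0 < f p.1 p.2.1 p.2.2)).card ≤ n →
    (∀ t, t < H → ∀ s s', 0 ≤ f t s s') →
    (∀ s s', s ≠ s₀ → f 0 s s' = 0) →
    (∑ s' : S, f 0 s₀ s' = m) →
    (∀ t, 1 ≤ t → t < H → ∀ s : S,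
        ∑ s' : S, f t s s' = ∑ s'' : S, f (t - 1) s'' s) →
    ∃ c : (Fin (H + 1) → S) → ℝ,
      (∀ τ, 0 ≤ c τ) ∧
      (∀ τ, τ 0 ≠ s₀ → c τ = 0) ∧
      (Finset.univ.filter fun τ : Fin (H + 1) → S => 0 < c τ).card ≤
        ((Finset.range H ×ˢ (Finset.univ : Finset (S × S))).filter
          (fun p => 0 < f p.1 p.2.1 p.2.2)).card ∧
      (∑ τ : Fin (H + 1) → S, c τ = m) ∧
      (∀ t : Fin H, ∀ s s' : S,
        f t s s' = ∑ τ ∈ Finset.univ.filter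
          (fun τ : Fin (H + 1) → S => τ t.castSucc = s ∧ τ t.succ = s'), c τ) := by
  intro n
  induction n with
  | zero =>
      intro f m hcard hnn hf0 hsum hcons
      refine flowDecompTrivial s₀ H hH f m ?_ hsum
      intro t ht s s'
      by_contra hne
      have hpos : 0 < f t s s' := lt_of_le_of_ne (hnn t ht s s') (Ne.symm hne)
      have hmem : ((t, (s, s')) : ℕ × S × S) ∈
          ((Finset.range H ×ˢ (Finset.univ : Finset (S × S))).filter
            (fun p => 0 < f p.1 p.2.1 p.2.2)) := by
        simp [Finset.mem_filter, Finset.mem_product, ht, hpos]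
      have : 0 < ((Finset.range H ×ˢ (Finset.univ : Finset (S × S))).filter
          (fun p => 0 < f p.1 p.2.1 p.2.2)).card := Finset.card_pos.2 ⟨_, hmem⟩
      omega
  | succ n ih =>
      intro f m hcard hnn hf0 hsum hcons
      by_cases hemp : ∀ t, t < H → ∀ s s', f t s s' = 0
      · exact flowDecompTrivial s₀ H hH f m hemp hsum
      push_neg at hemp
      obtain ⟨t₀, ht₀, s₁, s₂, hne0⟩ := hemp
      have hpos₀ : 0 < f t₀ s₁ s₂ := lt_of_le_of_ne (hnn t₀ ht₀ s₁ s₂) (Ne.symm hne0)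
      have hm : 0 < m := by
        have hmass := flowMass f s₀ H m hf0 hsum hcons t₀ ht₀
        have h1 : f t₀ s₁ s₂ ≤ ∑ s' : S, f t₀ s₁ s' :=
          Finset.single_le_sum (fun s' _ => hnn t₀ ht₀ s₁ s') (Finset.mem_univ _)
        have h2 : ∑ s' : S, f t₀ s₁ s' ≤ ∑ s : S, ∑ s' : S, f t₀ s s' :=
          Finset.single_le_sum
            (fun s _ => Finset.sum_nonneg fun s' _ => hnn t₀ ht₀ s s') (Finset.mem_univ _)
        linarith
      have h0ex : ∃ s', 0 < f 0 s₀ s' := by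
        by_contra hc
        push_neg at hc
        have : ∑ s' : S, f 0 s₀ s' ≤ 0 := Finset.sum_nonpos fun s' _ => hc s'
        linarith
      set g := flowPath f s₀ with hg
      have hg0 : g 0 = s₀ := rfl
      have hpath : ∀ t, t < H → 0 < f t (g t) (g (t + 1)) :=
        flowPath_pos f s₀ H hnn hcons h0ex
      have hne' : (Finset.univ : Finset (Fin H)).Nonempty := ⟨⟨0, hH⟩, Finset.mem_univ _⟩
      set ε := Finset.inf' Finset.univ hne' (fun t : Fin H => f t (g t) (g (t + 1))) with hε
      have hεpos : 0 < ε := by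
        rw [hε, Finset.lt_inf'_iff]
        exact fun t _ => hpath t t.isLt
      have hεle : ∀ t : Fin H, ε ≤ f t (g t) (g (t + 1)) :=
        fun t => Finset.inf'_le _ (Finset.mem_univ t)
      obtain ⟨tm, _, htm⟩ :=
        Finset.exists_mem_eq_inf' hne' (fun t : Fin H => f t (g t) (g (t + 1)))
      set f' : ℕ → S → S → ℝ := fun t s s' =>
        f t s s' -
          (if t < H then (if g t = s then (if g (t + 1) = s' then ε else 0) else 0) else 0)
        with hf'
      have hind_nonneg : ∀ t s s', (0:ℝ) ≤
          (if t < H then (if g t = s then (if g (t + 1) = s' then ε else 0) else 0) else 0) := by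
        intro t s s'
        split_ifs <;> simp [le_of_lt hεpos]
      have hnn' : ∀ t, t < H → ∀ s s', 0 ≤ f' t s s' := by
        intro t ht s s'
        simp only [hf', if_pos ht]
        by_cases h2 : g t = s
        · by_cases h3 : g (t + 1) = s'
          · rw [if_pos h2, if_pos h3]
            subst h2; subst h3
            exact sub_nonneg.2 (hεle ⟨t, ht⟩)
          · rw [if_pos h2, if_neg h3, sub_zero]; exact hnn t ht s s'
        · rw [if_neg h2, sub_zero]; exact hnn t ht s s'
      have hf0' : ∀ s s', s ≠ s₀ → f' 0 s s' = 0 := by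
        intro s s' hs
        simp only [hf']
        rw [hf0 s s' hs]
        have hgs : g 0 ≠ s := fun h => hs (h.symm.trans hg0)
        rw [if_pos (show 0 < H from hH), if_neg hgs, sub_zero]
      have hsum' : ∑ s' : S, f' 0 s₀ s' = m - ε := by
        have h1 : ∀ s' : S, f' 0 s₀ s' = f 0 s₀ s' - (if g (0 + 1) = s' then ε else 0) := by
          intro s'
          simp only [hf']
          rw [if_pos (show 0 < H from hH), if_pos hg0]
        rw [Finset.sum_congr rfl (fun s' _ => h1 s'), Finset.sum_sub_distrib, hsum,
          Finset.sum_ite_eq]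
        simp
      have hcons' : ∀ t, 1 ≤ t → t < H → ∀ s : S,
          ∑ s' : S, f' t s s' = ∑ s'' : S, f' (t - 1) s'' s := by
        intro t ht1 ht s
        have ht' : t - 1 < H := lt_of_le_of_lt (Nat.sub_le t 1) ht
        have htt : t - 1 + 1 = t := Nat.sub_add_cancel ht1
        have h1 : ∀ s' : S, f' t s s' =
            f t s s' - (if g t = s then (if g (t + 1) = s' then ε else 0) else 0) := by
          intro s'
          simp only [hf']
          rw [if_pos ht]
        have h2 : ∀ s'' : S, f' (t - 1) s'' s =
            f (t - 1) s'' s - (if g (t - 1) = s'' then (if g t = s then ε else 0) else 0) := by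
          intro s''
          simp only [hf']
          rw [if_pos ht', htt]
        rw [Finset.sum_congr rfl (fun s' _ => h1 s'),
          Finset.sum_congr rfl (fun s'' _ => h2 s''),
          Finset.sum_sub_distrib, Finset.sum_sub_distrib, hcons t ht1 ht s]
        congr 1
        by_cases hgt : g t = s
        · simp only [if_pos hgt]
          rw [Finset.sum_ite_eq, Finset.sum_ite_eq]
          simp
        · simp [if_neg hgt]
      -- strict inclusion of positive-edge sets
      have hEsub : ((Finset.range H ×ˢ (Finset.univ : Finset (S × S))).filter
            (fun p => 0 < f' p.1 p.2.1 p.2.2)) ⊂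
          ((Finset.range H ×ˢ (Finset.univ : Finset (S × S))).filter
            (fun p => 0 < f p.1 p.2.1 p.2.2)) := by
        rw [Finset.ssubset_iff_of_subset]
        · refine ⟨((tm : ℕ), (g tm, g (tm + 1))), ?_, ?_⟩
          · simp only [Finset.mem_filter, Finset.mem_product, Finset.mem_range,
              Finset.mem_univ, and_true]
            exact ⟨tm.isLt, hpath tm tm.isLt⟩
          · simp only [Finset.mem_filter, Finset.mem_product, Finset.mem_range,
              Finset.mem_univ, and_true, not_and, not_lt]
            intro _
            have hεeq : ε = f (tm : ℕ) (g tm) (g (tm + 1)) := hε.trans htm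
            have : f' (tm : ℕ) (g tm) (g (tm + 1)) = 0 := by
              simp [hf', tm.isLt, ← hεeq]
            rw [this]
          -- subset
        · intro p hp
          simp only [Finset.mem_filter] at hp ⊢
          refine ⟨hp.1, ?_⟩
          have hip := hind_nonneg p.1 p.2.1 p.2.2
          have : f' p.1 p.2.1 p.2.2 ≤ f p.1 p.2.1 p.2.2 := by
            simp only [hf']
            linarith
          linarith [hp.2]
      have hcard' : ((Finset.range H ×ˢ (Finset.univ : Finset (S × S))).filter
          (fun p => 0 < f' p.1 p.2.1 p.2.2)).card ≤ n :=
        Nat.lt_succ_iff.mp (lt_of_lt_of_le (Finset.card_lt_card hEsub) hcard)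
      obtain ⟨c', hc'nn, hc'init, hc'card, hc'sum, hc'marg⟩ :=
        ih f' (m - ε) hcard' hnn' hf0' hsum' hcons'
      set τp : Fin (H + 1) → S := fun i => g i.val with hτp
      have hτp0 : τp 0 = s₀ := hg0
      refine ⟨fun τ => c' τ + (if τ = τp then ε else 0), ?_, ?_, ?_, ?_, ?_⟩
      · intro τ
        dsimp only
        have := hc'nn τ
        split_ifs <;> [linarith [hεpos]; linarith]
      · intro τ hτ
        dsimp only
        have hne : τ ≠ τp := fun h => hτ (by rw [h, hτp0])
        rw [hc'init τ hτ, if_neg hne, add_zero]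
      · -- card bound
        dsimp only
        have hsub : (Finset.univ.filter fun τ : Fin (H + 1) → S =>
              0 < c' τ + (if τ = τp then ε else 0)) ⊆
            insert τp (Finset.univ.filter fun τ : Fin (H + 1) → S => 0 < c' τ) := by
          intro τ hτ
          simp only [Finset.mem_filter, Finset.mem_univ, true_and] at hτ
          by_cases h : τ = τp
          · exact h ▸ Finset.mem_insert_self _ _
          · rw [if_neg h, add_zero] at hτ
            exact Finset.mem_insert_of_mem (Finset.mem_filter.2 ⟨Finset.mem_univ _, hτ⟩)
        calc (Finset.univ.filter fun τ : Fin (H + 1) → S =>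
              0 < c' τ + (if τ = τp then ε else 0)).card
            ≤ (insert τp (Finset.univ.filter fun τ : Fin (H + 1) → S => 0 < c' τ)).card :=
              Finset.card_le_card hsub
          _ ≤ (Finset.univ.filter fun τ : Fin (H + 1) → S => 0 < c' τ).card + 1 :=
              Finset.card_insert_le _ _
          _ ≤ ((Finset.range H ×ˢ (Finset.univ : Finset (S × S))).filter
                (fun p => 0 < f' p.1 p.2.1 p.2.2)).card + 1 := by
              exact Nat.add_le_add_right hc'card 1
          _ ≤ ((Finset.range H ×ˢ (Finset.univ : Finset (S × S))).filter
                (fun p => 0 < f p.1 p.2.1 p.2.2)).card :=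
              Nat.succ_le_of_lt (Finset.card_lt_card hEsub)
      · dsimp only
        rw [Finset.sum_add_distrib, hc'sum, Finset.sum_ite_eq']
        simp
      · intro t s s'
        dsimp only
        have hmem : (τp ∈ Finset.univ.filter fun τ : Fin (H + 1) → S =>
            τ t.castSucc = s ∧ τ t.succ = s') ↔ (g (t : ℕ) = s ∧ g ((t : ℕ) + 1) = s') := by
          simp only [Finset.mem_filter, Finset.mem_univ, true_and, hτp]
          rw [Fin.coe_castSucc, Fin.val_succ]
        calc f (t : ℕ) s s'
            = f' (t : ℕ) s s' + (if g (t : ℕ) = s ∧ g ((t : ℕ) + 1) = s' then ε else 0) := by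
              simp only [hf']
              rw [if_pos t.isLt]
              by_cases h1 : g (t : ℕ) = s
              · by_cases h2 : g ((t : ℕ) + 1) = s'
                · rw [if_pos h1, if_pos h2, if_pos ⟨h1, h2⟩]; ring
                · rw [if_pos h1, if_neg h2, if_neg (fun h => h2 h.2)]; ring
              · rw [if_neg h1, if_neg (fun h => h1 h.1)]; ring
          _ = (∑ τ ∈ Finset.univ.filter (fun τ : Fin (H + 1) → S =>
                τ t.castSucc = s ∧ τ t.succ = s'), c' τ) +
              (if τp ∈ Finset.univ.filter (fun τ : Fin (H + 1) → S =>
                τ t.castSucc = s ∧ τ t.succ = s') then ε else 0) := by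
              rw [← hc'marg t s s']
              congr 1
              rw [if_congr hmem rfl rfl]
          _ = ∑ τ ∈ Finset.univ.filter (fun τ : Fin (H + 1) → S =>
                τ t.castSucc = s ∧ τ t.succ = s'),
              (c' τ + (if τ = τp then ε else 0)) := by
              rw [Finset.sum_add_distrib, Finset.sum_ite_eq']

/-- Theorem I.1, flow decomposition: a unit flow
(f_t)_{t<H} on the layered trajectory graph decomposes into at most
|{(t,s,s′) : f_t(s,s′) > 0}| weighted trajectories, and consequently the
weighted sum of trajectory returns equals the flow-weighted sum of rewards. -/
theorem stmt15 (S : Type*) [Fintype S] [DecidableEq S] (s₀ : S)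
    (H : ℕ) (hH : 1 ≤ H) (f : ℕ → S → S → ℝ)
    (hf_nonneg : ∀ t, t < H → ∀ s s', 0 ≤ f t s s')
    (hf0 : ∀ s s', s ≠ s₀ → f 0 s s' = 0)
    (hf0sum : ∑ s' : S, f 0 s₀ s' = 1)
    (hcons : ∀ t, 1 ≤ t → t < H → ∀ s : S,
      ∑ s' : S, f t s s' = ∑ s'' : S, f (t - 1) s'' s) :
    ∃ c : (Fin (H + 1) → S) → ℝ,
      (∀ τ, 0 ≤ c τ) ∧
      (∀ τ, τ 0 ≠ s₀ → c τ = 0) ∧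
      (Finset.univ.filter fun τ : Fin (H + 1) → S => 0 < c τ).card ≤
        ((Finset.range H ×ˢ (Finset.univ : Finset (S × S))).filter
          fun p => 0 < f p.1 p.2.1 p.2.2).card ∧
      (∑ τ : Fin (H + 1) → S, c τ = 1) ∧
      (∀ t : Fin H, ∀ s s' : S,
        f t s s' = ∑ τ ∈ Finset.univ.filter
          (fun τ : Fin (H + 1) → S => τ t.castSucc = s ∧ τ t.succ = s'), c τ) ∧
      (∀ k : ℕ, 1 ≤ k → ∀ R : S → EuclideanSpace ℝ (Fin k),
        ∑ τ : Fin (H + 1) → S, c τ • (∑ t : Fin H, R (τ t.castSucc)) =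
          ∑ t : Fin H, ∑ s : S, ∑ s' : S, f t s s' • R s) := by
  obtain ⟨c, hnn, hinit, hcard, hsum, hmarg⟩ :=
    flowDecompAux s₀ H hH
      (((Finset.range H ×ˢ (Finset.univ : Finset (S × S))).filter
        (fun p => 0 < f p.1 p.2.1 p.2.2)).card) f 1 le_rfl hf_nonneg hf0 hf0sum hcons
  refine ⟨c, hnn, hinit, hcard, hsum, hmarg, ?_⟩
  intro k hk R
  calc ∑ τ : Fin (H + 1) → S, c τ • (∑ t : Fin H, R (τ t.castSucc))
      = ∑ τ : Fin (H + 1) → S, ∑ t : Fin H, c τ • R (τ t.castSucc) :=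
        Finset.sum_congr rfl fun τ _ => Finset.smul_sum
    _ = ∑ t : Fin H, ∑ τ : Fin (H + 1) → S, c τ • R (τ t.castSucc) := Finset.sum_comm
    _ = ∑ t : Fin H, ∑ s : S, ∑ s' : S, f t s s' • R s := by
        refine Finset.sum_congr rfl fun t _ => ?_
        have hfib : ∑ τ : Fin (H + 1) → S, c τ • R (τ t.castSucc)
            = ∑ p : S × S, ∑ τ ∈ Finset.univ.filter
                (fun τ : Fin (H + 1) → S => (τ t.castSucc, τ t.succ) = p),
                c τ • R (τ t.castSucc) :=
          (Finset.sum_fiberwise _ _ _).symm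
        rw [hfib, Fintype.sum_prod_type]
        refine Finset.sum_congr rfl fun s _ => Finset.sum_congr rfl fun s' _ => ?_
        have hset : Finset.univ.filter
              (fun τ : Fin (H + 1) → S => (τ t.castSucc, τ t.succ) = (s, s'))
            = Finset.univ.filter
              (fun τ : Fin (H + 1) → S => τ t.castSucc = s ∧ τ t.succ = s') := by
          apply Finset.filter_congr
          intro τ _
          simp [Prod.ext_iff]
        rw [hset]
        calc ∑ τ ∈ Finset.univ.filter
              (fun τ : Fin (H + 1) → S => τ t.castSucc = s ∧ τ t.succ = s'),
              c τ • R (τ t.castSucc)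
            = ∑ τ ∈ Finset.univ.filter
              (fun τ : Fin (H + 1) → S => τ t.castSucc = s ∧ τ t.succ = s'),
              c τ • R s :=
              Finset.sum_congr rfl fun τ hτ => by
                rw [(Finset.mem_filter.1 hτ).2.1]
          _ = (∑ τ ∈ Finset.univ.filter
              (fun τ : Fin (H + 1) → S => τ t.castSucc = s ∧ τ t.succ = s'),
              c τ) • R s := (Finset.sum_smul).symm
          _ = f t s s' • R s := by rw [← hmarg t s s']
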